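/- Let P* be the polynomial ring over ℤ in variables x_m (one for each integer m ≥ 1) together with two further variables y and z, and let 𝔟* be the ideal of P* generated by the elements 1 + x₂ − x₁; 1 + x₃ − x₂; 1 + x₄ − x₃ + 3y; 1 + x_{m+1} − x_m + y for every m ≥ 4; 1 + z + y + x₄; and y(z − y). Then there is a ring isomorphism P*/𝔟* → ℤ[u,v]/(uv) sending x₁ ↦ u+v+2, x₂ ↦ u+v+1, x₃ ↦ u+v, x_m ↦ v+1−(m−2)(u+1) for every m ≥ 4, y ↦ u, and z ↦ u−v. -/

import Mathlib

open MvPolynomial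

/-- Index type for the polynomial ring `P*`: one variable `x m` for each integer `m ≥ 1`,
together with two further variables `y` and `z`. -/
inductive PVar : Type where
  | x : {m : ℕ // 1 ≤ m} → PVar
  | y : PVar
  | z : PVar

/-- The variable `x_m` (for `m ≥ 1`). -/
noncomputable def xv (m : ℕ) (h : 1 ≤ m) : MvPolynomial PVar ℤ := X (PVar.x ⟨m, h⟩)

noncomputable def yv : MvPolynomial PVar ℤ := X PVar.y

noncomputable def zv : MvPolynomial PVar ℤ := X PVar.z

/-- The ideal `𝔟*` of `P*`. -/
noncomputable def bstar : Ideal (MvPolynomial PVar ℤ) :=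
  Ideal.span
    (({1 + xv 2 (by norm_num) - xv 1 (by norm_num),
       1 + xv 3 (by norm_num) - xv 2 (by norm_num),
       1 + xv 4 (by norm_num) - xv 3 (by norm_num) + 3 * yv,
       1 + zv + yv + xv 4 (by norm_num),
       yv * (zv - yv)} : Set (MvPolynomial PVar ℤ)) ∪
     {p | ∃ (m : ℕ) (hm : 4 ≤ m),
        p = 1 + xv (m + 1) (by omega) - xv m (by omega) + yv})

noncomputable def uPoly : MvPolynomial (Fin 2) ℤ := X 0

noncomputable def vPoly : MvPolynomial (Fin 2) ℤ := X 1

/-- The ideal `(uv)` of `ℤ[u,v]`. -/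
noncomputable def uvIdeal : Ideal (MvPolynomial (Fin 2) ℤ) := Ideal.span {uPoly * vPoly}

/-- There is a ring isomorphism `P*/𝔟* → ℤ[u,v]/(uv)` sending `x₁ ↦ u+v+2`,
`x₂ ↦ u+v+1`, `x₃ ↦ u+v`, `x_m ↦ v+1−(m−2)(u+1)` for `m ≥ 4`, `y ↦ u`, `z ↦ u−v`. -/
/- auxiliary development -/

noncomputable def f0 : PVar → MvPolynomial (Fin 2) ℤ
  | .x ⟨m, _⟩ =>
      if m ≤ 3 then uPoly + vPoly + ((3 - m : ℕ) : MvPolynomial (Fin 2) ℤ)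
      else vPoly + 1 - ((m : MvPolynomial (Fin 2) ℤ) - 2) * (uPoly + 1)
  | .y => uPoly
  | .z => uPoly - vPoly

lemma f0_x (m : ℕ) (h : 1 ≤ m) :
    f0 (PVar.x ⟨m, h⟩) =
      if m ≤ 3 then uPoly + vPoly + ((3 - m : ℕ) : MvPolynomial (Fin 2) ℤ)
      else vPoly + 1 - ((m : MvPolynomial (Fin 2) ℤ) - 2) * (uPoly + 1) := rfl

lemma f0_y : f0 PVar.y = uPoly := rfl
lemma f0_z : f0 PVar.z = uPoly - vPoly := rfl

lemma aeval_f0_xv (m : ℕ) (h : 1 ≤ m) :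
    aeval f0 (xv m h) =
      if m ≤ 3 then uPoly + vPoly + ((3 - m : ℕ) : MvPolynomial (Fin 2) ℤ)
      else vPoly + 1 - ((m : MvPolynomial (Fin 2) ℤ) - 2) * (uPoly + 1) := by
  rw [xv, aeval_X, f0_x]

lemma aeval_f0_yv : aeval f0 yv = uPoly := by rw [yv, aeval_X, f0_y]
lemma aeval_f0_zv : aeval f0 zv = uPoly - vPoly := by rw [zv, aeval_X, f0_z]

noncomputable def F0 : MvPolynomial PVar ℤ →ₐ[ℤ] (MvPolynomial (Fin 2) ℤ ⧸ uvIdeal) :=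
  (Ideal.Quotient.mkₐ ℤ uvIdeal).comp (aeval f0)

lemma F0_eq (p : MvPolynomial PVar ℤ) :
    F0 p = Ideal.Quotient.mk uvIdeal (aeval f0 p) := rfl

lemma F0_eq' (p : MvPolynomial PVar ℤ) :
    F0.toRingHom p = Ideal.Quotient.mk uvIdeal (aeval f0 p) := rfl

lemma uv_mem : ∀ p : MvPolynomial (Fin 2) ℤ, uPoly * vPoly ∣ p → p ∈ uvIdeal := by
  intro p hp
  rw [uvIdeal, Ideal.mem_span_singleton]; exact hp

lemma hF0 : ∀ a ∈ bstar, F0 a = 0 := by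
  have hle : bstar ≤ RingHom.ker F0.toRingHom := by
    rw [bstar, Ideal.span_le]
    rintro p (hp | ⟨m, hm, rfl⟩) <;>
      refine SetLike.mem_coe.2 (RingHom.mem_ker.2 ?_)
    · simp only [Set.mem_insert_iff, Set.mem_singleton_iff] at hp
      rcases hp with rfl | rfl | rfl | rfl | rfl <;>
        rw [F0_eq', Ideal.Quotient.eq_zero_iff_mem] <;>
        simp only [map_add, map_sub, map_mul, map_one, map_ofNat,
          aeval_f0_xv, aeval_f0_yv, aeval_f0_zv] <;>
        norm_num
      · ring_nf; exact Ideal.zero_mem _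
      · ring_nf; exact Ideal.zero_mem _
      · ring_nf; exact Ideal.zero_mem _
      · ring_nf; exact Ideal.zero_mem _
      · exact uv_mem _ (dvd_refl _)
    · rw [F0_eq', Ideal.Quotient.eq_zero_iff_mem]
      simp only [map_add, map_sub, map_one, aeval_f0_xv, aeval_f0_yv]
      rw [if_neg (by omega : ¬ (m + 1 ≤ 3)), if_neg (by omega : ¬ (m ≤ 3))]
      push_cast
      ring_nf
      exact Ideal.zero_mem _
  exact fun a ha => hle ha

noncomputable def theta : (MvPolynomial PVar ℤ ⧸ bstar) →ₐ[ℤ] (MvPolynomial (Fin 2) ℤ ⧸ uvIdeal) :=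
  Ideal.Quotient.liftₐ bstar F0 hF0

lemma theta_mk (p : MvPolynomial PVar ℤ) :
    theta (Ideal.Quotient.mk bstar p) = Ideal.Quotient.mk uvIdeal (aeval f0 p) := by
  rw [theta, Ideal.Quotient.liftₐ_apply]
  rfl

noncomputable def g0 : Fin 2 → MvPolynomial PVar ℤ := ![yv, yv - zv]

noncomputable def G0 : MvPolynomial (Fin 2) ℤ →ₐ[ℤ] (MvPolynomial PVar ℤ ⧸ bstar) :=
  (Ideal.Quotient.mkₐ ℤ bstar).comp (aeval g0)

lemma G0_eq (p : MvPolynomial (Fin 2) ℤ) :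
    G0 p = Ideal.Quotient.mk bstar (aeval g0 p) := rfl

lemma hG0 : ∀ a ∈ uvIdeal, G0 a = 0 := by
  have hle : uvIdeal ≤ RingHom.ker G0.toRingHom := by
    rw [uvIdeal, Ideal.span_le]
    rintro p hp
    rw [Set.mem_singleton_iff] at hp
    subst hp
    refine SetLike.mem_coe.2 (RingHom.mem_ker.2 ?_)
    show G0 (uPoly * vPoly) = 0
    rw [G0_eq, Ideal.Quotient.eq_zero_iff_mem]
    have h : aeval g0 (uPoly * vPoly) = -(yv * (zv - yv)) := by
      simp [uPoly, vPoly, g0]; ring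
    rw [h]
    refine neg_mem (Ideal.subset_span ?_)
    exact Or.inl (by simp)
  exact fun a ha => hle ha

noncomputable def psi : (MvPolynomial (Fin 2) ℤ ⧸ uvIdeal) →ₐ[ℤ] (MvPolynomial PVar ℤ ⧸ bstar) :=
  Ideal.Quotient.liftₐ uvIdeal G0 hG0

lemma psi_mk (p : MvPolynomial (Fin 2) ℤ) :
    psi (Ideal.Quotient.mk uvIdeal p) = Ideal.Quotient.mk bstar (aeval g0 p) := by
  rw [psi, Ideal.Quotient.liftₐ_apply]
  rfl

noncomputable abbrev mkb : MvPolynomial PVar ℤ →+* (MvPolynomial PVar ℤ ⧸ bstar) :=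
  Ideal.Quotient.mk bstar

lemma mk_gen_zero (p : MvPolynomial PVar ℤ)
    (hp : p ∈ (({1 + xv 2 (by norm_num) - xv 1 (by norm_num),
       1 + xv 3 (by norm_num) - xv 2 (by norm_num),
       1 + xv 4 (by norm_num) - xv 3 (by norm_num) + 3 * yv,
       1 + zv + yv + xv 4 (by norm_num),
       yv * (zv - yv)} : Set (MvPolynomial PVar ℤ)) ∪
     {p | ∃ (m : ℕ) (hm : 4 ≤ m),
        p = 1 + xv (m + 1) (by omega) - xv m (by omega) + yv})) :
    mkb p = 0 :=
  Ideal.Quotient.eq_zero_iff_mem.2 (Ideal.subset_span hp)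

lemma rel4 (h : 1 ≤ 4) : mkb (xv 4 h) = -1 - mkb yv - mkb zv := by
  have h0 := mk_gen_zero (1 + zv + yv + xv 4 (by norm_num)) (Or.inl (by simp))
  simp only [map_add, map_one] at h0
  linear_combination h0

lemma rel3 (h : 1 ≤ 3) : mkb (xv 3 h) = 2 * mkb yv - mkb zv := by
  have h0 := mk_gen_zero (1 + xv 4 (by norm_num) - xv 3 h + 3 * yv)
    (Or.inl (by simp))
  simp only [map_add, map_sub, map_mul, map_one, map_ofNat] at h0
  rw [rel4] at h0
  linear_combination -h0

lemma rel2 (h : 1 ≤ 2) : mkb (xv 2 h) = 2 * mkb yv - mkb zv + 1 := by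
  have h0 := mk_gen_zero (1 + xv 3 (by norm_num) - xv 2 h) (Or.inl (by simp))
  simp only [map_add, map_sub, map_one] at h0
  rw [rel3] at h0
  linear_combination -h0

lemma rel1 (h : 1 ≤ 1) : mkb (xv 1 h) = 2 * mkb yv - mkb zv + 2 := by
  have h0 := mk_gen_zero (1 + xv 2 (by norm_num) - xv 1 h) (Or.inl (by simp))
  simp only [map_add, map_sub, map_one] at h0
  rw [rel2] at h0
  linear_combination -h0

lemma relm : ∀ (m : ℕ) (hm : 4 ≤ m) (h : 1 ≤ m),
    mkb (xv m h) = (mkb yv - mkb zv) + 1 -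
      ((m : MvPolynomial PVar ℤ ⧸ bstar) - 2) * (mkb yv + 1) := by
  intro m
  induction m with
  | zero => omega
  | succ n ih =>
    intro hm h
    rcases Nat.lt_or_ge n 4 with hn | hn
    · have hn4 : n = 3 := by omega
      subst hn4
      rw [rel4]
      push_cast
      ring
    · have h0 := mk_gen_zero (1 + xv (n + 1) (by omega) - xv n (by omega) + yv)
        (Or.inr ⟨n, hn, rfl⟩)
      simp only [map_add, map_sub, map_one] at h0
      rw [ih hn (by omega)] at h0
      push_cast
      push_cast at h0
      linear_combination h0

lemma theta_psi : theta.comp psi = AlgHom.id ℤ _ := by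
  apply Ideal.Quotient.algHom_ext
  apply MvPolynomial.algHom_ext
  intro i
  simp only [AlgHom.comp_apply, Ideal.Quotient.mkₐ_eq_mk, AlgHom.id_apply]
  rw [psi_mk, theta_mk]
  fin_cases i
  · show Ideal.Quotient.mk uvIdeal (aeval f0 (aeval g0 (X 0))) = _
    rw [show (aeval g0) (X (0 : Fin 2)) = yv from by simp [g0], aeval_f0_yv]
    rfl
  · show Ideal.Quotient.mk uvIdeal (aeval f0 (aeval g0 (X 1))) = _
    rw [show (aeval g0) (X (1 : Fin 2)) = yv - zv from by simp [g0]]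
    rw [map_sub, aeval_f0_yv, aeval_f0_zv,
      show uPoly - (uPoly - vPoly) = vPoly from by ring]
    rfl

lemma psi_theta : psi.comp theta = AlgHom.id ℤ _ := by
  apply Ideal.Quotient.algHom_ext
  apply MvPolynomial.algHom_ext
  intro i
  simp only [AlgHom.comp_apply, Ideal.Quotient.mkₐ_eq_mk, AlgHom.id_apply]
  rw [theta_mk, psi_mk]
  cases i with
  | y =>
    rw [show (X PVar.y : MvPolynomial PVar ℤ) = yv from rfl, aeval_f0_yv]
    rw [show (aeval g0) uPoly = yv from by simp [g0, uPoly]]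
  | z =>
    rw [show (X PVar.z : MvPolynomial PVar ℤ) = zv from rfl, aeval_f0_zv]
    rw [map_sub, show (aeval g0) uPoly = yv from by simp [g0, uPoly],
      show (aeval g0) vPoly = yv - zv from by simp [g0, vPoly]]
    rw [map_sub, map_sub]
    ring
  | x p =>
    obtain ⟨m, hm⟩ := p
    rw [show (X (PVar.x ⟨m, hm⟩) : MvPolynomial PVar ℤ) = xv m hm from rfl, aeval_f0_xv]
    by_cases h3 : m ≤ 3
    · rw [if_pos h3]
      simp only [map_add, map_natCast,
        show (aeval g0) uPoly = yv from by simp [g0, uPoly],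
        show (aeval g0) vPoly = yv - zv from by simp [g0, vPoly]]
      simp only [map_add, map_sub, map_natCast]
      interval_cases m
      · rw [rel1 hm]; push_cast; ring
      · rw [rel2 hm]; push_cast; ring
      · rw [rel3 hm]; push_cast; ring
    · rw [if_neg h3]
      simp only [map_add, map_sub, map_mul, map_one, map_natCast,
        show (aeval g0) uPoly = yv from by simp [g0, uPoly],
        show (aeval g0) vPoly = yv - zv from by simp [g0, vPoly]]
      simp only [map_add, map_sub, map_mul, map_one, map_natCast, map_ofNat]
      rw [relm m (by omega) hm]

noncomputable def eAlg : (MvPolynomial PVar ℤ ⧸ bstar) ≃ₐ[ℤ] (MvPolynomial (Fin 2) ℤ ⧸ uvIdeal) :=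
  AlgEquiv.ofAlgHom theta psi theta_psi psi_theta

lemma eAlg_apply (q : MvPolynomial PVar ℤ ⧸ bstar) : eAlg.toRingEquiv q = theta q := rfl


theorem pstar_iso_theta :
    ∃ e : (MvPolynomial PVar ℤ ⧸ bstar) ≃+* (MvPolynomial (Fin 2) ℤ ⧸ uvIdeal),
      e (Ideal.Quotient.mk bstar (xv 1 (by norm_num))) =
        Ideal.Quotient.mk uvIdeal (uPoly + vPoly + 2) ∧
      e (Ideal.Quotient.mk bstar (xv 2 (by norm_num))) =
        Ideal.Quotient.mk uvIdeal (uPoly + vPoly + 1) ∧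
      e (Ideal.Quotient.mk bstar (xv 3 (by norm_num))) =
        Ideal.Quotient.mk uvIdeal (uPoly + vPoly) ∧
      (∀ (m : ℕ) (hm : 4 ≤ m),
        e (Ideal.Quotient.mk bstar (xv m (by omega))) =
          Ideal.Quotient.mk uvIdeal
            (vPoly + 1 - ((m : MvPolynomial (Fin 2) ℤ) - 2) * (uPoly + 1))) ∧
      e (Ideal.Quotient.mk bstar yv) = Ideal.Quotient.mk uvIdeal uPoly ∧
      e (Ideal.Quotient.mk bstar zv) = Ideal.Quotient.mk uvIdeal (uPoly - vPoly) := by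
  refine ⟨eAlg.toRingEquiv, ?_, ?_, ?_, ?_, ?_, ?_⟩
  · rw [eAlg_apply, theta_mk, aeval_f0_xv, if_pos (by norm_num)]
    norm_num
  · rw [eAlg_apply, theta_mk, aeval_f0_xv, if_pos (by norm_num)]
    norm_num
  · rw [eAlg_apply, theta_mk, aeval_f0_xv, if_pos (by norm_num)]
    norm_num
  · intro m hm
    rw [eAlg_apply, theta_mk, aeval_f0_xv, if_neg (by omega)]
  · rw [eAlg_apply, theta_mk, aeval_f0_yv]
  · rw [eAlg_apply, theta_mk, aeval_f0_zv]
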